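/- Every Fréchet–Urysohn Hausdorff rectifiable space G is an α₄-space: for any point x ∈ G and any countable family {S_n : n ∈ ℕ} of sequences each converging to x, there is a sequence S converging to x that intersects S_n for infinitely many n. -/

import Mathlib

open Filter Topology

private lemma pigeon_aux {f : ℕ → ℕ} {J : Set ℕ} (hJ : J.Infinite) {c : ℕ}
    (hf : ∀ i ∈ J, f i ≤ c) : ∃ v, {i | i ∈ J ∧ f i = v}.Infinite := by
  by_contra h
  push_neg at h
  have hsub : J ⊆ ⋃ v ∈ Finset.range (c + 1), {i | i ∈ J ∧ f i = v} := by
    intro i hi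
    simp only [Set.mem_iUnion]
    exact ⟨f i, by simpa using Nat.lt_succ_of_le (hf i hi), hi, rfl⟩
  exact hJ ((Set.Finite.biUnion (Finset.range (c + 1)).finite_toSet
    (fun v _ => h v)).subset hsub)

private lemma infinite_unbdd {J : Set ℕ} (hJ : J.Infinite) : ∀ c, ∃ i ∈ J, c < i := by
  intro c
  by_contra h
  push_neg at h
  exact hJ ((Set.finite_Icc 0 c).subset fun i hi => ⟨Nat.zero_le _, h i hi⟩)

private lemma extract_aux {J : Set ℕ} (m : ℕ → ℕ)
    (hm : ∀ c, ∃ i ∈ J, c < m i) :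
    ∃ φ : ℕ → ℕ, StrictMono φ ∧ (∀ j, φ j ∈ J) ∧ StrictMono (m ∘ φ) := by
  choose g hg1 hg2 using hm
  let φ : ℕ → ℕ := fun j => Nat.rec (g 0)
    (fun _ prev => g ((Finset.range (prev + 1)).sup m)) j
  have hstep : ∀ j, φ (j + 1) = g ((Finset.range (φ j + 1)).sup m) := fun j => rfl
  have hmem : ∀ j, φ j ∈ J := by
    intro j
    cases j with
    | zero => exact hg1 0
    | succ j => rw [hstep]; exact hg1 _
  have hmlt : ∀ j, m (φ j) < m (φ (j + 1)) := by
    intro j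
    have h1 : (Finset.range (φ j + 1)).sup m < m (φ (j + 1)) := by
      rw [hstep]; exact hg2 _
    exact lt_of_le_of_lt (Finset.le_sup (Finset.self_mem_range_succ (φ j))) h1
  have hlt : ∀ j, φ j < φ (j + 1) := by
    intro j
    by_contra h
    push_neg at h
    have h1 : m (φ (j + 1)) ≤ (Finset.range (φ j + 1)).sup m :=
      Finset.le_sup (Finset.mem_range.mpr (Nat.lt_succ_of_le h))
    have h2 : (Finset.range (φ j + 1)).sup m < m (φ (j + 1)) := by
      rw [hstep]; exact hg2 _
    omega
  exact ⟨φ, strictMono_nat_of_lt_succ hlt, hmem,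
    strictMono_nat_of_lt_succ fun j => hmlt j⟩

private lemma main_aux {G : Type*} [TopologicalSpace G] [T2Space G] [FrechetUrysohnSpace G]
    (p q : G → G → G)
    (hp : Continuous fun z : G × G => p z.1 z.2)
    (hq : Continuous fun z : G × G => q z.1 z.2)
    (e : G)
    (hpq : ∀ x y : G, p x (q x y) = y)
    (hqp : ∀ x y : G, q x (p x y) = y)
    (hqe : ∀ x : G, q x x = e)
    (x : G) (S : ℕ → ℕ → G) (hS : ∀ n, Tendsto (S n) atTop (𝓝 x))
    (hx : ∀ n m, S n m ≠ x) :
    ∃ s : ℕ → G, Tendsto s atTop (𝓝 x) ∧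
      {n : ℕ | ∃ k m : ℕ, s k = S n m}.Infinite := by
  have hpc : ∀ a, Continuous (fun y => p a y) :=
    fun a => hp.comp (Continuous.prodMk continuous_const continuous_id)
  have hqc : ∀ a, Continuous (fun y => q a y) :=
    fun a => hq.comp (Continuous.prodMk continuous_const continuous_id)
  have hqx : Continuous (fun y => q y x) :=
    hq.comp (Continuous.prodMk continuous_id continuous_const)
  have pae : ∀ a, p a e = a := fun a => by rw [← hqe a]; exact hpq a a
  -- the auxiliary sequence t
  set t : ℕ → G := fun n => p x (q (S 0 n) x) with ht_def
  have ht : Tendsto t atTop (𝓝 x) := by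
    have h1 : Tendsto (fun n => q (S 0 n) x) atTop (𝓝 (q x x)) :=
      (hqx.tendsto x).comp (hS 0)
    rw [hqe x] at h1
    have h2 : Tendsto (fun n => p x (q (S 0 n) x)) atTop (𝓝 (p x e)) :=
      ((hpc x).tendsto e).comp h1
    rwa [pae] at h2
  by_cases hB : {n | ∃ m, S n m = t n}.Infinite
  · refine ⟨t, ht, hB.mono ?_⟩
    rintro n ⟨m, hm⟩
    exact ⟨n, m, hm.symm⟩
  obtain ⟨c, hc⟩ := (Set.not_infinite.mp hB).bddAbove
  set N := c + 1 with hN_def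
  have hN : ∀ n, N ≤ n → ¬∃ m, S n m = t n := by
    intro n hn hmem
    have := hc hmem
    omega
  set A : Set G := {y | ∃ n m, N ≤ n ∧ y = p (S 0 n) (q x (S n m))} with hA_def
  have hclA : ∀ n, N ≤ n → S 0 n ∈ closure A := by
    intro n hn
    have h1 : Tendsto (fun m => q x (S n m)) atTop (𝓝 (q x x)) :=
      ((hqc x).tendsto x).comp (hS n)
    rw [hqe x] at h1
    have h2 : Tendsto (fun m => p (S 0 n) (q x (S n m))) atTop (𝓝 (p (S 0 n) e)) :=
      ((hpc _).tendsto e).comp h1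
    rw [pae] at h2
    exact mem_closure_of_tendsto h2 (Filter.Eventually.of_forall fun m => ⟨n, m, hn, rfl⟩)
  have hxA : x ∈ closure A := by
    have h3 : Tendsto (fun n => S 0 (n + N)) atTop (𝓝 x) :=
      (hS 0).comp (tendsto_add_atTop_nat N)
    have h4 := mem_closure_of_tendsto h3
      (Filter.Eventually.of_forall fun n => hclA (n + N) (Nat.le_add_left N n))
    rwa [closure_closure] at h4
  obtain ⟨a, haA, ha⟩ := mem_closure_iff_seq_limit.mp hxA
  choose n m hn hEq using haA
  have hkey : ∀ i, S (n i) (m i) = p x (q (S 0 (n i)) (a i)) := by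
    intro i
    rw [hEq i, hqp, hpq]
  by_cases hbdd : ∃ c', ∀ i, n i ≤ c'
  · -- n bounded : derive a contradiction
    exfalso
    obtain ⟨c', hc'⟩ := hbdd
    obtain ⟨n₀, hI⟩ := pigeon_aux (f := n) Set.infinite_univ (fun i _ => hc' i)
    set I : Set ℕ := {i | i ∈ Set.univ ∧ n i = n₀} with hI_def
    have hn₀N : N ≤ n₀ := by
      obtain ⟨i, hi⟩ := hI.nonempty
      rw [← hi.2]; exact hn i
    by_cases hmI : ∀ c'', ∃ i ∈ I, c'' < m i
    · -- m unbounded on the fiber : t n₀ = x, so S 0 n₀ = x, contradiction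
      obtain ⟨φ, hφ, hφI, hmφ⟩ := extract_aux m hmI
      have l1 : Tendsto (fun j => S n₀ (m (φ j))) atTop (𝓝 x) :=
        (hS n₀).comp hmφ.tendsto_atTop
      have heq1 : ∀ j, S n₀ (m (φ j)) = p x (q (S 0 n₀) (a (φ j))) := by
        intro j
        have h := hkey (φ j)
        rwa [(hφI j).2] at h
      have l2 : Tendsto (fun j => p x (q (S 0 n₀) (a (φ j)))) atTop
          (𝓝 (p x (q (S 0 n₀) x))) := by
        exact ((hpc x).tendsto _).comp (((hqc (S 0 n₀)).tendsto x).comp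
          (ha.comp hφ.tendsto_atTop))
      have l1' : Tendsto (fun j => p x (q (S 0 n₀) (a (φ j)))) atTop (𝓝 x) := by
        apply l1.congr
        intro j
        exact heq1 j
      have hux : p x (q (S 0 n₀) x) = x := tendsto_nhds_unique l2 l1'
      have h5 : q (S 0 n₀) x = e := by
        have := congrArg (q x) hux
        rw [hqp] at this
        rw [this, hqe]
      have h6 : S 0 n₀ = x := by
        have := hpq (S 0 n₀) x
        rw [h5, pae] at this
        exact this
      exact hx 0 n₀ h6
    · -- m bounded on the fiber : n₀ ∈ B, contradiction
      push_neg at hmI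
      obtain ⟨c₂, hc₂⟩ := hmI
      obtain ⟨m₀, hI'⟩ := pigeon_aux hI hc₂
      set I' : Set ℕ := {i | i ∈ I ∧ m i = m₀} with hI'_def
      obtain ⟨φ, hφ, hφI', -⟩ := extract_aux id (infinite_unbdd hI')
      have hconst : ∀ j, a (φ j) = p (S 0 n₀) (q x (S n₀ m₀)) := by
        intro j
        have h := hEq (φ j)
        rw [(hφI' j).1.2, (hφI' j).2] at h
        exact h
      have l1 : Tendsto (fun j => a (φ j)) atTop (𝓝 x) := ha.comp hφ.tendsto_atTop
      have l2 : Tendsto (fun j => a (φ j)) atTop (𝓝 (p (S 0 n₀) (q x (S n₀ m₀)))) := by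
        rw [tendsto_congr hconst]
        exact tendsto_const_nhds
      have hux : p (S 0 n₀) (q x (S n₀ m₀)) = x := tendsto_nhds_unique l2 l1
      have h5 : S n₀ m₀ = t n₀ := by
        have h6 := congrArg (q (S 0 n₀)) hux
        rw [hqp] at h6
        have h7 := congrArg (p x) h6
        rw [hpq] at h7
        exact h7
      exact hN n₀ hn₀N ⟨m₀, h5⟩
  · -- n unbounded : build the witness sequence
    push_neg at hbdd
    have hbdd' : ∀ c'', ∃ i ∈ (Set.univ : Set ℕ), c'' < n i := by
      intro c''
      obtain ⟨i, hi⟩ := hbdd c''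
      exact ⟨i, trivial, hi⟩
    obtain ⟨φ, hφ, -, hnφ⟩ := extract_aux n hbdd'
    refine ⟨fun j => S (n (φ j)) (m (φ j)), ?_, ?_⟩
    · have heq1 : ∀ j, S (n (φ j)) (m (φ j)) = p x (q (S 0 (n (φ j))) (a (φ j))) :=
        fun j => hkey (φ j)
      rw [tendsto_congr heq1]
      have l1 : Tendsto (fun j => S 0 (n (φ j))) atTop (𝓝 x) :=
        (hS 0).comp hnφ.tendsto_atTop
      have l2 : Tendsto (fun j => a (φ j)) atTop (𝓝 x) := ha.comp hφ.tendsto_atTop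
      have l3 : Tendsto (fun j => (S 0 (n (φ j)), a (φ j))) atTop (𝓝 (x, x)) :=
        l1.prodMk_nhds l2
      have l4 : Tendsto (fun j => q (S 0 (n (φ j))) (a (φ j))) atTop (𝓝 (q x x)) :=
        (hq.tendsto (x, x)).comp l3
      rw [hqe x] at l4
      have l5 : Tendsto (fun j => p x (q (S 0 (n (φ j))) (a (φ j)))) atTop (𝓝 (p x e)) :=
        ((hpc x).tendsto e).comp l4
      rwa [pae] at l5
    · have hsub : Set.range (fun j => n (φ j)) ⊆
          {n' | ∃ k m', S (n (φ k)) (m (φ k)) = S n' m'} := by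
        rintro _ ⟨j, rfl⟩
        exact ⟨j, m (φ j), rfl⟩
      exact (Set.infinite_range_of_injective hnφ.injective).mono hsub

/-- Every Fréchet–Urysohn Hausdorff rectifiable space is an α₄-space:
for each point `x` and each countable family of sequences converging to `x` there
is a sequence converging to `x` that meets infinitely many of them. -/
theorem stmt_9 {G : Type*} [TopologicalSpace G] [T2Space G] [FrechetUrysohnSpace G]
    (p q : G → G → G)
    (hp : Continuous fun z : G × G => p z.1 z.2)
    (hq : Continuous fun z : G × G => q z.1 z.2)
    (e : G)
    (hpq : ∀ x y : G, p x (q x y) = y)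
    (hqp : ∀ x y : G, q x (p x y) = y)
    (hqe : ∀ x : G, q x x = e) :
    ∀ x : G, ∀ S : ℕ → ℕ → G, (∀ n, Tendsto (S n) atTop (𝓝 x)) →
      ∃ s : ℕ → G, Tendsto s atTop (𝓝 x) ∧
        {n : ℕ | ∃ k m : ℕ, s k = S n m}.Infinite := by
  intro x S hS
  by_cases hBad : {n | ∃ m, S n m = x}.Infinite
  · refine ⟨fun _ => x, tendsto_const_nhds, hBad.mono ?_⟩
    rintro n ⟨m, hm⟩
    exact ⟨0, m, hm.symm⟩
  · obtain ⟨c, hc⟩ := (Set.not_infinite.mp hBad).bddAbove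
    have hx' : ∀ n m, S (n + (c + 1)) m ≠ x := by
      intro n m h
      have := hc ⟨m, h⟩
      omega
    obtain ⟨s, hs, hinf⟩ := main_aux p q hp hq e hpq hqp hqe x
      (fun n => S (n + (c + 1))) (fun n => hS _) hx'
    refine ⟨s, hs, ?_⟩
    have hsub : (· + (c + 1)) '' {n | ∃ k m, s k = S (n + (c + 1)) m} ⊆
        {n | ∃ k m, s k = S n m} := by
      rintro _ ⟨n', hn', rfl⟩
      exact hn'
    exact ((hinf.image (fun a _ b _ h => by omega))).mono hsub
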